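/- For any nontrivial ring R and any natural number n ≥ 2, the full n × n matrix ring M_n(R) is not a weakly ΔU-ring. -/

import Mathlib

/-- `Δ(R) = {r ∈ R : r + u is a unit for every unit u}`. -/
def Delta (R : Type*) [Ring R] : Set R :=
  {r : R | ∀ u : R, IsUnit u → IsUnit (r + u)}

/-- `R` is a weakly ΔU-ring: every unit is `1 + d` or `-1 + d` with `d ∈ Δ(R)`. -/
def IsWDU (R : Type*) [Ring R] : Prop :=
  ∀ u : R, IsUnit u → ∃ d ∈ Delta R, u = 1 + d ∨ u = -1 + d

/-- `R` is a ΔU-ring: every unit is `1 + d` with `d ∈ Δ(R)`. -/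
def IsDU (R : Type*) [Ring R] : Prop :=
  ∀ u : R, IsUnit u → ∃ d ∈ Delta R, u = 1 + d

/-- For a nontrivial ring `R` and `n ≥ 2`, `M_n(R)` is not weakly ΔU. -/
theorem stmt_6 (R : Type*) [Ring R] [Nontrivial R] (n : ℕ) (hn : 2 ≤ n) :
    ¬ IsWDU (Matrix (Fin n) (Fin n) R) := by
  intro h
  set i0 : Fin n := ⟨0, by omega⟩ with hi0
  set i1 : Fin n := ⟨1, by omega⟩ with hi1
  have hne : i0 ≠ i1 := by simp [hi0, hi1, Fin.ext_iff]
  set E : Matrix (Fin n) (Fin n) R := Matrix.single i0 i1 1 with hE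
  set F : Matrix (Fin n) (Fin n) R := Matrix.single i1 i0 1 with hF
  have hEE : E * E = 0 := Matrix.single_mul_single_of_ne _ _ _ _ hne.symm _
  have hFF : F * F = 0 := Matrix.single_mul_single_of_ne _ _ _ _ hne _
  -- `1 + E`, `1 + F`, `-1 + F` are units
  have hvE : IsUnit (1 + E) := by
    refine ⟨⟨1 + E, 1 - E, ?_, ?_⟩, rfl⟩
    · have : (1 + E) * (1 - E) = 1 - E * E := by noncomm_ring
      rw [this, hEE, sub_zero]
    · have : (1 - E) * (1 + E) = 1 - E * E := by noncomm_ring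
      rw [this, hEE, sub_zero]
  have hvF : IsUnit (1 + F) := by
    refine ⟨⟨1 + F, 1 - F, ?_, ?_⟩, rfl⟩
    · have : (1 + F) * (1 - F) = 1 - F * F := by noncomm_ring
      rw [this, hFF, sub_zero]
    · have : (1 - F) * (1 + F) = 1 - F * F := by noncomm_ring
      rw [this, hFF, sub_zero]
  have hvF' : IsUnit (-1 + F) := by
    refine ⟨⟨-1 + F, -1 - F, ?_, ?_⟩, rfl⟩
    · have : (-1 + F) * (-1 - F) = 1 - F * F := by noncomm_ring
      rw [this, hFF, sub_zero]
    · have : (-1 - F) * (-1 + F) = 1 - F * F := by noncomm_ring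
      rw [this, hFF, sub_zero]
  -- the matrix `M = 1 + E + F` is not a unit
  set x : Matrix (Fin n) (Fin n) R :=
    Matrix.single i0 i0 1 - Matrix.single i0 i1 1 with hx
  have hxM : x * (1 + E + F) = 0 := by
    have h1 : Matrix.single i0 i0 (1 : R) * E =
        Matrix.single i0 i1 (1 : R) := by
      rw [hE, Matrix.single_mul_single_same, one_mul]
    have h2 : Matrix.single i0 i1 (1 : R) * E = 0 :=
      Matrix.single_mul_single_of_ne _ _ _ _ hne.symm _
    have h3 : Matrix.single i0 i0 (1 : R) * F = 0 :=
      Matrix.single_mul_single_of_ne _ _ _ _ hne _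
    have h4 : Matrix.single i0 i1 (1 : R) * F =
        Matrix.single i0 i0 (1 : R) := by
      rw [hF, Matrix.single_mul_single_same, one_mul]
    have : x * (1 + E + F) = x + (x * E) + (x * F) := by noncomm_ring
    rw [this, hx, sub_mul, sub_mul, h1, h2, h3, h4]
    noncomm_ring
  have hxne : x ≠ 0 := by
    intro h0
    have h0' := congrFun (congrFun h0 i0) i0
    have hz : Matrix.single i0 i1 (1 : R) i0 i0 = 0 :=
      Matrix.single_apply_of_col_ne i0 i0 hne.symm 1
    rw [hx] at h0'
    simp only [Matrix.sub_apply, Matrix.single_apply_same, hz,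
      Matrix.zero_apply, sub_zero] at h0'
    exact one_ne_zero h0'
  have hMnotunit : ¬ IsUnit (1 + E + F) := by
    intro hM
    obtain ⟨v, hv⟩ := hM.exists_right_inv
    apply hxne
    have hc : x * ((1 + E + F) * v) = x := by rw [hv, mul_one]
    rw [← mul_assoc, hxM, zero_mul] at hc
    exact hc.symm
  -- apply WΔU to the unit `1 + E`
  obtain ⟨d, hd, hcase | hcase⟩ := h (1 + E) hvE
  · have hdE : d = E := (add_left_cancel hcase).symm
    have hu := hd (1 + F) hvF
    rw [hdE] at hu
    have heq : E + (1 + F) = 1 + E + F := by abel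
    rw [heq] at hu
    exact hMnotunit hu
  · have hdE : d = 2 + E := by
      have h' : -1 + d = 1 + E := hcase.symm
      have hstep : d = 1 + (1 + E) := by
        rw [← h', ← add_assoc]
        simp
      rw [hstep, ← add_assoc, one_add_one_eq_two]
    have hu := hd (-1 + F) hvF'
    rw [hdE] at hu
    have heq : (2 : Matrix (Fin n) (Fin n) R) + E + (-1 + F) = 1 + E + F := by
      rw [← one_add_one_eq_two]; abel
    rw [heq] at hu
    exact hMnotunit hu
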